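/- arXiv:1906.00211 — 7 statements merged into one kernel-verified Lean document; each statement's English description precedes it below -/
import Mathlib

section
/- Let $L \geq 1$ and let $C \in \mathbb{C}^{L\times L}$ be a circulant matrix whose first row is $(1, e^{i\varphi_1}, \ldots, e^{i\varphi_{L-1}})$ for some angles $\varphi_1,\ldots,\varphi_{L-1} \in [0,2\pi)$ (i.e., $C[k_1,k_2] = e^{i\varphi_{(k_2-k_1) \bmod L}}$ with $\varphi_0 = 0$). If $C$ is Hermitian and positive semidefinite, then there exists $\ell \in \{0,\ldots,L-1\}$ such that $C = f_\ell f_\ell^*$, where $f_\ell[k] = e^{-2\pi i k\ell/L}$. -/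
open Matrix
open scoped ComplexOrder

/-- The (unnormalized) DFT vector `f_ℓ[k] = e^{-2πikℓ/L}`. -/
noncomputable def fDFT (L : ℕ) (ℓ k : Fin L) : ℂ :=
  Complex.exp (-(2 * (Real.pi : ℂ) * Complex.I * ((k : ℕ) : ℂ) * ((ℓ : ℕ) : ℂ)) / (L : ℂ))

/-- A Hermitian PSD circulant matrix whose entries are unit-modulus phases
`C[k₁,k₂] = e^{iφ_{(k₂-k₁) mod L}}` (with `φ₀ = 0`) is a rank-one DFT projection
`f_ℓ f_ℓ^*` for some `ℓ`. -/
theorem stmt0 (L : ℕ) [NeZero L] (φ : Fin L → ℝ) (hφ0 : φ 0 = 0)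
    (hφ : ∀ m, φ m ∈ Set.Ico (0 : ℝ) (2 * Real.pi))
    (C : Matrix (Fin L) (Fin L) ℂ)
    (hC : ∀ k₁ k₂, C k₁ k₂ = Complex.exp (Complex.I * (φ (k₂ - k₁) : ℂ)))
    (hHerm : C.IsHermitian) (hPSD : C.PosSemidef) :
    ∃ ℓ : Fin L, ∀ k m : Fin L, C k m = fDFT L ℓ k * star (fDFT L ℓ m) := by
  classical
  have hstarx : ∀ x : ℝ, star (Complex.exp (Complex.I * (x : ℂ)))
      = Complex.exp (-(Complex.I * (x : ℂ))) := by
    intro x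
    rw [show (star (Complex.exp (Complex.I * (x:ℂ))) : ℂ)
        = (starRingEnd ℂ) (Complex.exp (Complex.I * (x:ℂ))) from rfl, ← Complex.exp_conj]
    congr 1
    simp [Complex.conj_I]
  set e : Fin L → ℂ := fun m => Complex.exp (Complex.I * (φ m : ℂ)) with he
  have hstar : ∀ m, star (e m) = Complex.exp (-(Complex.I * (φ m : ℂ))) :=
    fun m => hstarx (φ m)
  have hunit : ∀ m, e m * star (e m) = 1 := by
    intro m
    rw [hstar, he]
    rw [← Complex.exp_add]
    simp
  have he0 : e 0 = 1 := by simp [he, hφ0]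
  have hCe : ∀ k m : Fin L, C k m = e (m - k) := fun k m => hC k m
  have hdiag : ∀ k, C k k = 1 := by intro k; rw [hCe, sub_self, he0]
  have key : ∀ k m : Fin L, e (m - k) * e k = e m := by
    intro k m
    set s : ℂ := star (C k m) with hs
    set x : Fin L → ℂ := Pi.single k 1 - Pi.single m s with hx
    have hCx : C *ᵥ x = fun i => C i k - C i m * s := by
      rw [hx, mulVec_sub, mulVec_single, mulVec_single]
      funext i; simp; ring
    have hq : star x ⬝ᵥ C *ᵥ x = 0 := by
      rw [hCx, hx]
      have hsx : star (Pi.single k (1:ℂ) - Pi.single m s)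
          = Pi.single k (1:ℂ) - (Pi.single m (star s) : Fin L → ℂ) := by
        simp [← Pi.single_star]
      rw [hsx, sub_dotProduct, single_dotProduct, single_dotProduct]
      have h1 : C k m * s = 1 := by rw [hs, hCe, hunit]
      have h2 : C m k = s := by rw [hs, hHerm.apply]
      rw [hdiag k, hdiag m, h1, h2]
      ring
    have hCx0 : C *ᵥ x = 0 := (hPSD.dotProduct_mulVec_zero_iff x).mp hq
    have h0 : C 0 k - C 0 m * s = 0 := by
      have := congr_fun hCx0 0
      rwa [hCx] at this
    have hk : C 0 k = e k := by rw [hCe, sub_zero]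
    have hm : C 0 m = e m := by rw [hCe, sub_zero]
    have h0' : e k = e m * star (e (m - k)) := by
      have := sub_eq_zero.mp h0
      rwa [hk, hm, hs, hCe k m] at this
    calc e (m - k) * e k = e m * (star (e (m - k)) * e (m - k)) := by rw [h0']; ring
      _ = e m := by rw [mul_comm (star _), hunit, mul_one]
  have hadd : ∀ a b : Fin L, e a * e b = e (a + b) := by
    intro a b
    have := key b (a + b)
    rwa [add_sub_cancel_right] at this
  open Fin.NatCast in
  have hpow : ∀ n : ℕ, e ((n : Fin L)) = e 1 ^ n := by
    intro n
    induction n with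
    | zero => simpa using he0
    | succ n ih =>
      have : ((n + 1 : ℕ) : Fin L) = (n : Fin L) + 1 := by push_cast; ring
      rw [this, ← hadd, ih, pow_succ]
  -- e 1 is an L-th root of unity
  have he1 : e 1 = Complex.exp (Complex.I * (φ 1 : ℂ)) := rfl
  have hL1 : e 1 ^ L = 1 := by
    have := hpow L
    rwa [Fin.natCast_self, he0, eq_comm] at this
  have hexp : Complex.exp ((L : ℂ) * (Complex.I * (φ 1 : ℂ))) = 1 := by
    rw [Complex.exp_nat_mul, ← he1]; exact hL1
  obtain ⟨t, ht⟩ := Complex.exp_eq_one_iff.mp hexp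
  have htr : (L : ℝ) * φ 1 = (t : ℝ) * (2 * Real.pi) := by
    have h2 : Complex.I * (((L : ℝ) * φ 1 : ℝ) : ℂ)
        = Complex.I * (((t : ℝ) * (2 * Real.pi) : ℝ) : ℂ) := by
      push_cast at ht ⊢
      linear_combination ht
    have h3 := mul_left_cancel₀ Complex.I_ne_zero h2
    exact_mod_cast h3
  have hpi := Real.pi_pos
  have hLpos : (0 : ℝ) < L := by
    exact_mod_cast Nat.pos_of_ne_zero (NeZero.ne L)
  have ht0 : (0 : ℝ) ≤ (t : ℝ) := by nlinarith [(hφ 1).1, (hφ 1).2]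
  have htL : (t : ℝ) < (L : ℝ) := by nlinarith [(hφ 1).1, (hφ 1).2]
  have ht0' : (0 : ℤ) ≤ t := by exact_mod_cast ht0
  have htL' : t < (L : ℤ) := by exact_mod_cast htL
  have hlt : t.toNat < L := by omega
  refine ⟨⟨t.toNat, hlt⟩, ?_⟩
  set ℓ : Fin L := ⟨t.toNat, hlt⟩ with hℓ
  have hlc : (((ℓ : ℕ) : ℕ) : ℂ) = (t : ℂ) := by
    have h := Int.toNat_of_nonneg ht0'
    rw [hℓ]
    exact_mod_cast congrArg (Int.cast : ℤ → ℂ) h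
  have hLne : (L : ℂ) ≠ 0 := by exact_mod_cast (Nat.cast_ne_zero (R := ℂ)).mpr (NeZero.ne L)
  have hc : (L : ℂ) * ((φ 1 : ℝ) : ℂ) = (t : ℂ) * (2 * (Real.pi : ℂ)) := by
    have h := congrArg (Complex.ofReal) htr
    push_cast at h
    linear_combination h
  have hfd : ∀ m : Fin L, star (fDFT L ℓ m)
      = Complex.exp ((2 * (Real.pi : ℂ) * Complex.I * ((m : ℕ) : ℂ) * (((ℓ : ℕ) : ℕ) : ℂ)) / (L : ℂ)) := by
    intro m
    rw [fDFT, Complex.star_def, ← Complex.exp_conj]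
    congr 1
    simp [map_div₀, Complex.conj_I, map_ofNat]
  have hEm : ∀ m : Fin L, e m
      = Complex.exp ((2 * (Real.pi : ℂ) * Complex.I * ((m : ℕ) : ℂ) * (((ℓ : ℕ) : ℕ) : ℂ)) / (L : ℂ)) := by
    intro m
    have h1 : e m = e 1 ^ (m : ℕ) := by
      conv_lhs => rw [← Fin.cast_val_eq_self m]
      exact hpow m
    rw [h1, he1, ← Complex.exp_nat_mul]
    congr 1
    rw [hlc, eq_div_iff hLne]
    linear_combination (Complex.I * ((m : ℕ) : ℂ)) * hc
  have hes : ∀ m, e m = star (fDFT L ℓ m) := fun m => (hEm m).trans (hfd m).symm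
  intro k m
  have hkm : C k m = e m * star (e k) := by
    calc C k m = e (m - k) * (e k * star (e k)) := by rw [hunit, mul_one, hCe]
      _ = (e (m - k) * e k) * star (e k) := by ring
      _ = e m * star (e k) := by rw [key k m]
  rw [hkm, hes m, hes k, star_star]
  ring
end

section
/- Let $C \in \mathbb{C}^{L \times L}$ be a Hermitian matrix with unit-modulus entries, i.e., $|C[k_1,k_2]| = 1$ for all $k_1,k_2$. If $C$ is positive semidefinite, then $C$ has rank one. -/
open Matrix
open scoped ComplexOrder

/-- A Hermitian positive semidefinite matrix all of whose entries have modulus one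
has rank one. -/
theorem stmt2 (L : ℕ) (hL : 0 < L) (C : Matrix (Fin L) (Fin L) ℂ)
    (hHerm : C.IsHermitian) (hmod : ∀ k₁ k₂, ‖C k₁ k₂‖ = 1)
    (hPSD : C.PosSemidef) : C.rank = 1 := by
  set i0 : Fin L := ⟨0, hL⟩ with hi0
  -- diagonal entries equal 1
  have hdiag : ∀ k, C k k = 1 := by
    intro k
    have h1 : (0:ℂ) ≤ C k k := by
      have := hPSD.dotProduct_mulVec_nonneg (Pi.single k 1)
      simpa [dotProduct, mulVec, Pi.single_apply, Finset.sum_ite_eq', Finset.mem_univ] using this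
    obtain ⟨him, hre⟩ : (C k k).im = 0 ∧ 0 ≤ (C k k).re := by
      rw [Complex.le_def] at h1
      exact ⟨h1.2.symm, by simpa using h1.1⟩
    have habs := hmod k k
    rw [Complex.norm_def, Complex.normSq_apply, him] at habs
    have : (C k k).re = 1 := by
      nlinarith [Real.sq_sqrt (by positivity : (0:ℝ) ≤ (C k k).re * (C k k).re + 0 * 0),
        Real.sqrt_nonneg ((C k k).re * (C k k).re + 0 * 0)]
    exact Complex.ext (by simpa using this) (by simpa using him)
  have hconj : ∀ k₁ k₂, C k₂ k₁ = starRingEnd ℂ (C k₁ k₂) := by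
    intro k₁ k₂
    have := congrFun (congrFun hHerm k₂) k₁
    simpa [conjTranspose_apply] using this.symm
  have hmul : ∀ k₁ k₂, C k₁ k₂ * C k₂ k₁ = 1 := by
    intro k₁ k₂
    rw [hconj k₁ k₂, Complex.mul_conj]
    norm_cast
    rw [Complex.normSq_eq_norm_sq, hmod]
    norm_num
  -- key identity
  have key : ∀ j k, C k j = C i0 j * C k i0 := by
    intro j k
    set z : Fin L → ℂ := fun m =>
      (if m = j then 1 else 0) - C i0 j * (if m = i0 then 1 else 0) with hz
    have hq : star z ⬝ᵥ C *ᵥ z = 0 := by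
      simp only [dotProduct, mulVec, hz, Pi.star_apply, star_sub, apply_ite star, star_one,
        star_zero, star_mul', mul_sub, sub_mul, mul_ite, mul_one, mul_zero, ite_mul, zero_mul,
        one_mul, Finset.sum_sub_distrib, Finset.sum_ite_eq', Finset.mem_univ, if_true,
        Finset.mul_sum]
      rw [hdiag j, hdiag i0]
      have h1 : starRingEnd ℂ (C i0 j) * C i0 j = 1 := by
        rw [← hconj]; exact hmul j i0
      have h2 : C j i0 * C i0 j = 1 := hmul j i0
      linear_combination -h2
    have hz0 : C *ᵥ z = 0 := (hPSD.dotProduct_mulVec_zero_iff z).mp hq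
    have hk := congrFun hz0 k
    simp only [mulVec, dotProduct, hz, mul_sub, mul_ite, mul_one, mul_zero,
      Finset.sum_sub_distrib, Finset.sum_ite_eq', Finset.mem_univ, if_true, Pi.zero_apply,
      sub_eq_zero, Finset.mul_sum] at hk
    rw [hk]; ring
  -- hence C is vecMulVec
  have hC : C = vecMulVec (fun k => C k i0) (fun j => C i0 j) := by
    ext k j
    rw [vecMulVec_apply]
    rw [key j k]; ring
  have hle : C.rank ≤ 1 := by
    rw [hC, vecMulVec_eq (Fin 1)]
    calc (Matrix.replicateCol (Fin 1) (fun k => C k i0) * Matrix.replicateRow (Fin 1) fun j => C i0 j).rank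
        ≤ (Matrix.replicateRow (Fin 1) fun j => C i0 j).rank := rank_mul_le_right _ _
      _ ≤ 1 := by simpa using rank_le_card_height (Matrix.replicateRow (Fin 1) fun j => C i0 j)
  have hne : C.rank ≠ 0 := by
    intro h0
    have : LinearMap.range C.mulVecLin = ⊥ := by
      rw [Matrix.rank] at h0
      exact Submodule.finrank_eq_zero.mp h0
    have hv : C *ᵥ Pi.single i0 1 = 0 := by
      have : C.mulVecLin (Pi.single i0 1) ∈ (⊥ : Submodule ℂ (Fin L → ℂ)) := by
        rw [← this]; exact LinearMap.mem_range_self _ _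
      simpa [Matrix.mulVecLin] using this
    have := congrFun hv i0
    simp [mulVec, dotProduct, Pi.single_apply, Finset.sum_ite_eq', hdiag i0] at this
  omega
end

section
/- Let $X \in \mathbb{C}^{L\times L}$ be Hermitian. Define $S \in \mathbb{C}^{L^2 \times L^2}$ by $S[k_1 + iL,\, k_2 + jL] = X[k_1,k_2] \cdot \overline{X[(k_1 - i)\bmod L,\, (k_2 - j)\bmod L]}$ for $k_1,k_2,i,j \in \{0,\ldots,L-1\}$. Then $S$ is Hermitian, and if $X$ is positive semidefinite then $S$ is positive semidefinite. -/
open Matrix Kronecker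
open scoped ComplexOrder

private lemma conjTranspose_kron {n : Type*} (A B : Matrix n n ℂ) :
    (A ⊗ₖ B)ᴴ = Aᴴ ⊗ₖ Bᴴ := by
  ext ⟨a, b⟩ ⟨c, d⟩
  simp [conjTranspose_apply, kroneckerMap_apply, mul_comm]

private lemma kron_posSemidef {n : Type*} [Fintype n] {A B : Matrix n n ℂ}
    (hA : A.PosSemidef) (hB : B.PosSemidef) : (A ⊗ₖ B).PosSemidef := by
  classical
  exact hA.kronecker hB

open Matrix
/-- For Hermitian `X`, the `L² × L²` matrix
`S[(k₁,i),(k₂,j)] = X[k₁,k₂] ⬝ conj X[(k₁-i) mod L, (k₂-j) mod L]` is Hermitian, and if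
`X` is PSD then `S` is PSD. -/
theorem stmt5 (L : ℕ) (X : Matrix (Fin L) (Fin L) ℂ) (hX : X.IsHermitian)
    (S : Matrix (Fin L × Fin L) (Fin L × Fin L) ℂ)
    (hS : ∀ k₁ i k₂ j : Fin L,
      S (k₁, i) (k₂, j) = X k₁ k₂ * star (X (k₁ - i) (k₂ - j))) :
    S.IsHermitian ∧ (X.PosSemidef → S.PosSemidef) := by
  have hXc : (X.map star).IsHermitian := by
    ext a b
    simp only [conjTranspose_apply, map_apply, star_star]
    exact congrFun (congrFun hX.symm b) a
  have hSeq : S = (X ⊗ₖ X.map star).submatrix (fun p => (p.1, p.1 - p.2))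
      (fun p => (p.1, p.1 - p.2)) := by
    ext ⟨k₁, i⟩ ⟨k₂, j⟩
    simp [hS, submatrix_apply, kroneckerMap_apply, map_apply]
  have hKH : (X ⊗ₖ X.map star).IsHermitian := by
    rw [IsHermitian, conjTranspose_kron, hX.eq, hXc.eq]
  constructor
  · rw [hSeq]
    exact hKH.submatrix _
  · intro hP
    have hPc : (X.map star).PosSemidef := by
      have : X.map star = Xᵀ := by
        ext a b
        simp only [map_apply, transpose_apply]
        exact congrFun (congrFun hX b) a
      rw [this]
      exact hP.transpose
    rw [hSeq]
    exact (kron_posSemidef hP hPc).submatrix _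
end

section
/- Let $\hat{\Sigma} \in \mathbb{C}^{L\times L}$ be Hermitian PSD with $\hat{\Sigma} = \lambda v v^*$ for some $\lambda > 0$ and $v \in \mathbb{C}^L$ with $v[k] \neq 0$ for all $k$ (i.e., rank one with nowhere-vanishing eigenvector). Suppose $\widetilde{X} = \hat{\Sigma} \odot \operatorname{Circulant}\{[1, e^{i\psi_1}, \ldots, e^{i\psi_{L-1}}]\}$ is Hermitian and positive semidefinite for some angles $\psi_1,\ldots,\psi_{L-1}$. Then there exists $\ell \in \{0,\ldots,L-1\}$ such that $\widetilde{X} = \operatorname{diag}(f_\ell) \cdot \hat{\Sigma} \cdot \operatorname{diag}(f_\ell)^*$, where $f_\ell[k] = e^{-2\pi i k \ell / L}$. -/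
open Matrix
open scoped ComplexOrder

/-- Circulant phase retrieval for rank-one covariances: if `Σ = λ v v^*` with `λ > 0`
and `v` nowhere vanishing, and `X̃ = Σ ⊙ Circulant{[1, e^{iψ₁}, …, e^{iψ_{L-1}}]}` is
Hermitian and PSD, then `X̃ = diag(f_ℓ) Σ diag(f_ℓ)^*` for some `ℓ`. -/
theorem stmt7 (L : ℕ) [NeZero L] (lam : ℝ) (hlam : 0 < lam)
    (v : Fin L → ℂ) (hv : ∀ k, v k ≠ 0)
    (Sig : Matrix (Fin L) (Fin L) ℂ)
    (hSig : ∀ k m, Sig k m = (lam : ℂ) * v k * star (v m))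
    (ψ : Fin L → ℝ) (hψ0 : ψ 0 = 0)
    (Xt : Matrix (Fin L) (Fin L) ℂ)
    (hXt : ∀ k₁ k₂, Xt k₁ k₂ = Sig k₁ k₂ * Complex.exp (Complex.I * (ψ (k₂ - k₁) : ℂ)))
    (hHerm : Xt.IsHermitian) (hPSD : Xt.PosSemidef) :
    ∃ ℓ : Fin L,
      Xt = Matrix.diagonal (fDFT L ℓ) * Sig * (Matrix.diagonal (fDFT L ℓ))ᴴ := by
  obtain ⟨N, rfl⟩ : ∃ N, L = N + 1 := ⟨L - 1, (Nat.succ_pred_eq_of_ne_zero (NeZero.ne L)).symm⟩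
  letI : CommRing (Fin (N + 1)) := Fin.instCommRing (N + 1)
  set g : Fin (N + 1) → ℂ := fun d => Complex.exp (Complex.I * (ψ d : ℂ)) with hgdef
  have hlamC : ((lam : ℂ)) ≠ 0 := by
    exact_mod_cast Complex.ofReal_ne_zero.mpr hlam.ne'
  have hg0 : g 0 = 1 := by simp [hgdef, hψ0]
  have hgabs : ∀ d, ‖g d‖ = 1 := by
    intro d
    simp [hgdef, Complex.norm_exp]
  have hgconj : ∀ d, (starRingEnd ℂ) (g d) * g d = 1 := by
    intro d
    rw [mul_comm, Complex.mul_conj]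
    norm_cast
    rw [Complex.normSq_eq_norm_sq, hgabs]; norm_num
  -- Hermitian symmetry of the phase function
  have hherm : ∀ d, g (-d) = (starRingEnd ℂ) (g d) := by
    intro d
    have h := hHerm.apply 0 d
    rw [hXt, hXt, hSig, hSig] at h
    have h' : (lam : ℂ) * v 0 * star (v d) * ((starRingEnd ℂ) (g (0 - d)))
        = (lam : ℂ) * v 0 * star (v d) * g d := by
      calc (lam : ℂ) * v 0 * star (v d) * ((starRingEnd ℂ) (g (0 - d)))
          = star ((lam : ℂ) * v d * star (v 0) *
              Complex.exp (Complex.I * (ψ (0 - d) : ℂ))) := by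
            simp only [star_mul', star_star, Complex.star_def, Complex.conj_ofReal,
              Complex.conj_conj, hgdef]
            ring
        _ = (lam : ℂ) * v 0 * star (v d) * Complex.exp (Complex.I * (ψ (d - 0) : ℂ)) := h
        _ = (lam : ℂ) * v 0 * star (v d) * g d := by rw [sub_zero]
    have hne : (lam : ℂ) * v 0 * star (v d) ≠ 0 :=
      mul_ne_zero (mul_ne_zero hlamC (hv 0)) (star_ne_zero.mpr (hv d))
    have h2 := mul_left_cancel₀ hne h'
    have h3 := congrArg (starRingEnd ℂ) h2
    rw [Complex.conj_conj] at h3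
    rw [zero_sub] at h3
    exact h3
  -- PSD quadratic form for the phase matrix
  have hQ : ∀ x : Fin (N + 1) → ℂ,
      0 ≤ ∑ k, ∑ m, (starRingEnd ℂ) (x k) * g (m - k) * x m := by
    intro x
    have h := hPSD.dotProduct_mulVec_nonneg (fun k => x k / (starRingEnd ℂ) (v k))
    have hexp : star (fun k => x k / (starRingEnd ℂ) (v k)) ⬝ᵥ
        Xt *ᵥ (fun k => x k / (starRingEnd ℂ) (v k))
        = (lam : ℂ) * ∑ k, ∑ m, (starRingEnd ℂ) (x k) * g (m - k) * x m := by
      simp only [dotProduct, mulVec, Pi.star_apply, star_div₀, star_star]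
      rw [Finset.mul_sum]
      refine Finset.sum_congr rfl fun k _ => ?_
      rw [Finset.mul_sum, Finset.mul_sum]
      refine Finset.sum_congr rfl fun m _ => ?_
      rw [hXt, hSig]
      have hvk := hv k
      have hvm : (starRingEnd ℂ) (v m) ≠ 0 := by
        simpa using star_ne_zero.mpr (hv m)
      have : Complex.exp (Complex.I * (ψ (m - k) : ℂ)) = g (m - k) := rfl
      rw [this]
      field_simp [hvk, hvm]
      simp only [Complex.star_def, Complex.conj_conj]
      ring
    rw [hexp] at h
    set S : ℂ := ∑ k, ∑ m, (starRingEnd ℂ) (x k) * g (m - k) * x m with hSdef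
    rw [Complex.le_def] at h ⊢
    constructor
    · have h1 := h.1
      rw [Complex.zero_re, Complex.re_ofReal_mul] at h1
      rw [Complex.zero_re]
      nlinarith [h1, hlam]
    · have h2 := h.2
      rw [Complex.zero_im, Complex.im_ofReal_mul] at h2
      rw [Complex.zero_im]
      have := (mul_eq_zero.mp h2.symm).resolve_left (by exact_mod_cast hlam.ne')
      exact this.symm ▸ rfl
  -- multiplicativity of the phase function
  have hmul : ∀ a b : Fin (N + 1), g (a + b) = g a * g b := by
    intro a b
    rcases eq_or_ne a 0 with ha | ha
    · simp [ha, hg0]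
    rcases eq_or_ne b 0 with hb | hb
    · simp [hb, hg0]
    rcases eq_or_ne (a + b) 0 with hc | hc
    · have hb' : b = -a := by linear_combination hc
      rw [hc, hg0, hb', hherm, mul_comm]
      exact (hgconj a).symm
    · set c := a + b with hcdef
      have hac : a ≠ c := by
        rw [hcdef]
        intro h
        exact hb (left_eq_add.mp h)
      have h0a : (0 : Fin (N + 1)) ≠ a := ha.symm
      have h0c : (0 : Fin (N + 1)) ≠ c := hc.symm
      set x : Fin (N + 1) → ℂ := fun j =>
        if j = 0 then 2 else if j = a then -(starRingEnd ℂ) (g a)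
          else if j = c then -(starRingEnd ℂ) (g c) else 0 with hxdef
      have hS := hQ x
      set w : ℂ := g a * g b * (starRingEnd ℂ) (g c) with hwdef
      have hsum : (∑ k, ∑ m, (starRingEnd ℂ) (x k) * g (m - k) * x m)
          = -2 + (w + (starRingEnd ℂ) w) := by
        have hsub : ({0, a, c} : Finset (Fin (N + 1))) ⊆ Finset.univ := Finset.subset_univ _
        have hout : ∀ j, j ∉ ({0, a, c} : Finset (Fin (N + 1))) → x j = 0 := by
          intro j hj
          simp only [Finset.mem_insert, Finset.mem_singleton, not_or] at hj
          simp [hxdef, hj.1, hj.2.1, hj.2.2]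
        have step1 : (∑ k, ∑ m, (starRingEnd ℂ) (x k) * g (m - k) * x m)
            = ∑ k ∈ ({0, a, c} : Finset (Fin (N + 1))),
                ∑ m ∈ ({0, a, c} : Finset (Fin (N + 1))),
                (starRingEnd ℂ) (x k) * g (m - k) * x m := by
          rw [← Finset.sum_subset hsub (fun k _ hk => by
            simp [hout k hk])]
          refine Finset.sum_congr rfl fun k _ => ?_
          rw [← Finset.sum_subset hsub (fun m _ hm => by
            simp [hout m hm])]
        rw [step1]
        have hmem : a ∉ ({c} : Finset (Fin (N + 1))) := by simp [hac]
        have hmem0 : (0 : Fin (N + 1)) ∉ ({a, c} : Finset (Fin (N + 1))) := by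
          simp [h0a, h0c]
        simp only [Finset.sum_insert hmem0, Finset.sum_insert hmem, Finset.sum_singleton]
        have e1 : (0 : Fin (N + 1)) - 0 = 0 := by ring
        have e2 : a - 0 = a := by ring
        have e3 : c - 0 = c := by ring
        have e4 : (0 : Fin (N + 1)) - a = -a := by ring
        have e5 : a - a = 0 := by ring
        have e6 : c - a = b := by rw [hcdef]; ring
        have e7 : (0 : Fin (N + 1)) - c = -c := by ring
        have e8 : a - c = -b := by rw [hcdef]; ring
        have e9 : c - c = 0 := by ring
        have hx0 : x 0 = 2 := by simp [hxdef]
        have hxa : x a = -(starRingEnd ℂ) (g a) := by simp [hxdef, h0a.symm]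
        have hxc : x c = -(starRingEnd ℂ) (g c) := by simp [hxdef, h0c.symm, hac.symm]
        simp only [e1, e2, e3, e4, e5, e6, e7, e8, e9, hx0, hxa, hxc, hg0,
          hherm a, hherm b, hherm c]
        have h1 := hgconj a
        have h2 := hgconj c
        have h3 := hgconj b
        simp only [hwdef, _root_.map_mul, Complex.conj_conj, map_ofNat, map_neg]
        linear_combination (-3 : ℂ) * h1 + (-3 : ℂ) * h2
      rw [hsum] at hS
      have habs : ‖w‖ = 1 := by
        rw [hwdef]
        simp [norm_mul, Complex.norm_conj, hgabs]
      have hre : 1 ≤ w.re := by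
        rw [Complex.le_def] at hS
        have := hS.1
        simp [Complex.add_re, Complex.conj_re] at this
        linarith
      have hrele : w.re ≤ 1 := habs ▸ Complex.re_le_norm w
      have hre1 : w.re = 1 := le_antisymm hrele hre
      have him : w.im = 0 := by
        have hsq := Complex.sq_norm w
        rw [habs, Complex.normSq_apply, hre1] at hsq
        nlinarith
      have hw1 : w = 1 := Complex.ext (by rw [hre1]; rfl) (by rw [him]; rfl)
      have : g a * g b * ((starRingEnd ℂ) (g c) * g c) = g c := by
        rw [← mul_assoc, ← hwdef, hw1, one_mul]
      rw [hgconj c, mul_one] at this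
      rw [← hcdef] at *
      exact this.symm
  -- g is determined by g 1
  have hpow : ∀ n : ℕ, g ((n : Fin (N + 1))) = g 1 ^ n := by
    intro n
    induction n with
    | zero => simpa using hg0
    | succ n ih =>
        have : ((n + 1 : ℕ) : Fin (N + 1)) = (n : Fin (N + 1)) + 1 := by push_cast; ring
        rw [this, hmul, ih, pow_succ]
  have hroot : g 1 ^ (N + 1) = 1 := by
    rw [← hpow, Fin.natCast_self, hg0]
  obtain ⟨i, hiN, hi⟩ :=
    (Complex.isPrimitiveRoot_exp (N + 1) (Nat.succ_ne_zero N)).eq_pow_of_pow_eq_one hroot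
  refine ⟨⟨i, hiN⟩, ?_⟩
  ext k m
  have hrhs : (Matrix.diagonal (fDFT (N + 1) ⟨i, hiN⟩) * Sig *
      (Matrix.diagonal (fDFT (N + 1) ⟨i, hiN⟩))ᴴ) k m
      = fDFT (N + 1) ⟨i, hiN⟩ k * Sig k m * star (fDFT (N + 1) ⟨i, hiN⟩ m) := by
    rw [Matrix.diagonal_conjTranspose, Matrix.mul_diagonal, Matrix.diagonal_mul]
    simp
  rw [hrhs, hXt]
  have hgmk : Complex.exp (Complex.I * (ψ (m - k) : ℂ)) = g 1 ^ ((m - k : Fin (N + 1)) : ℕ) := by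
    rw [← hpow, Fin.cast_val_eq_self]
  -- integer congruence for Fin subtraction
  obtain ⟨t, ht⟩ : ∃ t : ℤ, (((m - k : Fin (N + 1)) : ℕ) : ℤ)
      = ((m : ℕ) : ℤ) - ((k : ℕ) : ℤ) + ((N : ℤ) + 1) * t := by
    have hadd : (m - k) + k = m := sub_add_cancel m k
    have h2 : (((m - k : Fin (N + 1)) : ℕ) + (k : ℕ)) % (N + 1) = (m : ℕ) := by
      rw [← Fin.val_add, hadd]
    have h3 := Nat.div_add_mod (((m - k : Fin (N + 1)) : ℕ) + (k : ℕ)) (N + 1)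
    rw [h2] at h3
    refine ⟨((((m - k : Fin (N + 1)) : ℕ) + (k : ℕ)) / (N + 1) : ℕ), ?_⟩
    have h4 : ((((m - k : Fin (N + 1)) : ℕ) : ℤ) + ((k : ℕ) : ℤ))
        = ((N : ℤ) + 1) * ((((m - k : Fin (N + 1)) : ℕ) + (k : ℕ)) / (N + 1) : ℕ)
          + ((m : ℕ) : ℤ) := by exact_mod_cast h3.symm
    linarith [h4]
  have hphase : g 1 ^ ((m - k : Fin (N + 1)) : ℕ)
      = fDFT (N + 1) ⟨i, hiN⟩ k * star (fDFT (N + 1) ⟨i, hiN⟩ m) := by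
    rw [← hi, ← pow_mul, ← Complex.exp_nat_mul]
    unfold fDFT
    rw [Complex.star_def, ← Complex.exp_conj]
    rw [← Complex.exp_add]
    rw [Complex.exp_eq_exp_iff_exists_int]
    refine ⟨i * t, ?_⟩
    have htC : (((m - k : Fin (N + 1)) : ℕ) : ℂ)
        = ((m : ℕ) : ℂ) - ((k : ℕ) : ℂ) + ((N : ℂ) + 1) * (t : ℂ) := by
      exact_mod_cast congrArg (fun z : ℤ => (z : ℂ)) ht
    have hLne : ((N : ℂ) + 1) ≠ 0 := by
      have : ((N + 1 : ℕ) : ℂ) ≠ 0 := Nat.cast_ne_zero.mpr (Nat.succ_ne_zero N)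
      push_cast at this
      exact this
    have hconj : (starRingEnd ℂ) (-(2 * (Real.pi : ℂ) * Complex.I * ((m : ℕ) : ℂ)
        * ((i : ℕ) : ℂ)) / (((N + 1 : ℕ)) : ℂ))
        = (2 * (Real.pi : ℂ) * Complex.I * ((m : ℕ) : ℂ) * ((i : ℕ) : ℂ)) / (((N + 1 : ℕ)) : ℂ) := by
      simp only [map_div₀, map_neg, _root_.map_mul, Complex.conj_I, Complex.conj_ofReal,
        map_ofNat, Complex.conj_natCast]
      push_cast
      ring
    have hinv : ((N : ℂ) + 1) * ((N : ℂ) + 1)⁻¹ = 1 := mul_inv_cancel₀ hLne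
    rw [hconj]
    push_cast
    linear_combination (2 * (Real.pi : ℂ) * Complex.I * (i : ℂ) * ((N : ℂ) + 1)⁻¹) * htC
      + (2 * (Real.pi : ℂ) * Complex.I * (i : ℂ) * (t : ℂ)) * hinv
  rw [hgmk, hphase]
  ring
end

section
/- Let $d_0, d_1, \ldots, d_{L-1} \in \mathbb{C}^L$ with $d_m[k] \neq 0$ for all $m,k$, and set $G_m = d_m d_m^*$. Suppose $G_0^\star = G_0$ and $G_1^\star, \ldots, G_{L-1}^\star$ are Hermitian PSD matrices satisfying, for all $k_1,k_2,m \in \{0,\ldots,L-1\}$ (indices mod $L$): $G_m[k_1,k_2] + G_{k_2-k_1}[k_1,k_1+m] = G^\star_m[k_1,k_2] + G^\star_{k_2-k_1}[k_1,k_1+m]$. Then $G_m^\star = G_m$ for all $m$. -/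
open Matrix
open scoped ComplexOrder

/-- Uniqueness of the minimizer in the diagonal-recovery convex program: if
`G_m = d_m d_m^*` with nowhere-vanishing `d_m`, `G⋆₀ = G₀`, the `G⋆_m` (for `m ≠ 0`)
are Hermitian PSD, and the trispectrum equations
`G_m[k₁,k₂] + G_{k₂-k₁}[k₁,k₁+m] = G⋆_m[k₁,k₂] + G⋆_{k₂-k₁}[k₁,k₁+m]` hold for all
indices (mod `L`), then `G⋆_m = G_m` for all `m`. -/
theorem stmt15 (L : ℕ) [NeZero L] (d : Fin L → Fin L → ℂ) (hd : ∀ m k, d m k ≠ 0)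
    (G Gstar : Fin L → Matrix (Fin L) (Fin L) ℂ)
    (hG : ∀ m k₁ k₂, G m k₁ k₂ = d m k₁ * star (d m k₂))
    (hG0 : Gstar 0 = G 0)
    (hPSD : ∀ m, m ≠ 0 → (Gstar m).PosSemidef)
    (heq : ∀ k₁ k₂ m : Fin L,
      G m k₁ k₂ + G (k₂ - k₁) k₁ (k₁ + m) = Gstar m k₁ k₂ + Gstar (k₂ - k₁) k₁ (k₁ + m)) :
    ∀ m, Gstar m = G m := by
  -- Step 1: the main diagonals agree
  have diag : ∀ (n k : Fin L), Gstar n k k = G n k k := by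
    intro n k
    have h := heq k (k + n) 0
    rw [add_sub_cancel_left, add_zero, hG0] at h
    exact (add_left_cancel h).symm
  -- Step 2: the n-th cyclic diagonal of `Gstar n` agrees with that of `G n`
  have offdiag : ∀ (n k : Fin L), Gstar n k (k + n) = G n k (k + n) := by
    intro n k
    have h := heq k (k + n) n
    rw [add_sub_cancel_left] at h
    linear_combination (-1/2 : ℂ) * h
  -- the antisymmetry relation for the error terms
  have cross : ∀ (m n k : Fin L),
      Gstar m k (k + n) - G m k (k + n) = -(Gstar n k (k + m) - G n k (k + m)) := by
    intro m n k
    have h := heq k (k + n) m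
    rw [add_sub_cancel_left] at h
    linear_combination -h
  -- PSD rigidity: columns `k₂` and `k₂ + n` of `Gstar n` are proportional
  have shiftStar : ∀ (n k₁ k₂ : Fin L), n ≠ 0 →
      Gstar n k₁ (k₂ + n) * star (d n k₂) = star (d n (k₂ + n)) * Gstar n k₁ k₂ := by
    intro n k₁ k₂ hn
    have hA := hPSD n hn
    set i := k₂ with hi
    set j := k₂ + n with hj
    have hij : i ≠ j := by
      simp only [hi, hj]
      intro h
      exact hn (by simpa using h.symm)
    set x : Fin L → ℂ := fun a =>
      (if a = i then (star (d n i))⁻¹ else 0) + (if a = j then -(star (d n j))⁻¹ else 0) with hx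
    have hmv : ∀ a, (Gstar n *ᵥ x) a
        = Gstar n a i * (star (d n i))⁻¹ - Gstar n a j * (star (d n j))⁻¹ := by
      intro a
      simp [mulVec, dotProduct, hx, mul_add, mul_ite, mul_zero, mul_neg,
        Finset.sum_add_distrib, Finset.sum_ite_eq', sub_eq_add_neg]
    have hAii : Gstar n i i = d n i * star (d n i) := by rw [diag, hG]
    have hAjj : Gstar n j j = d n j * star (d n j) := by rw [diag, hG]
    have hAij : Gstar n i j = d n i * star (d n j) := by rw [hj, offdiag, hG]
    have hAji : Gstar n j i = star (d n i) * d n j := by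
      rw [← hA.isHermitian.apply j i, hAij]
      simp [mul_comm]
    have hdi : (starRingEnd ℂ) (d n i) ≠ 0 := star_ne_zero.mpr (hd _ _)
    have hdj : (starRingEnd ℂ) (d n j) ≠ 0 := star_ne_zero.mpr (hd _ _)
    have hdi0 : d n i ≠ 0 := hd _ _
    have hdj0 : d n j ≠ 0 := hd _ _
    have hdp : ∀ v : Fin L → ℂ, star x ⬝ᵥ v = (d n i)⁻¹ * v i - (d n j)⁻¹ * v j := by
      intro v
      simp [dotProduct, hx, add_mul, ite_mul, zero_mul, neg_mul, apply_ite (starRingEnd ℂ),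
        Finset.sum_add_distrib, Finset.sum_ite_eq', sub_eq_add_neg, star_inv₀]
    have hq : star x ⬝ᵥ Gstar n *ᵥ x = 0 := by
      rw [hdp, hmv i, hmv j, hAii, hAjj, hAij, hAji]
      field_simp
      simp
    have hker := (hA.dotProduct_mulVec_zero_iff x).mp hq
    have h1 := congrFun hker k₁
    rw [hmv k₁] at h1
    rw [Pi.zero_apply, sub_eq_zero] at h1
    field_simp at h1
    rw [div_eq_div_iff (star_ne_zero.mpr hdi0) (star_ne_zero.mpr hdj0)] at h1
    linear_combination -h1
  -- the same proportionality for the error matrices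
  have shiftE : ∀ (n k₁ k₂ : Fin L),
      (Gstar n k₁ (k₂ + n) - G n k₁ (k₂ + n)) * star (d n k₂)
        = star (d n (k₂ + n)) * (Gstar n k₁ k₂ - G n k₁ k₂) := by
    intro n k₁ k₂
    by_cases hn : n = 0
    · subst hn
      rw [add_zero]
      ring
    · have h1 := shiftStar n k₁ k₂ hn
      have h2 : G n k₁ (k₂ + n) * star (d n k₂) = star (d n (k₂ + n)) * G n k₁ k₂ := by
        rw [hG, hG]; ring
      linear_combination h1 - h2
  -- one step of the Euclid-style descent: shifting `m` by `n`
  have step : ∀ m n : Fin L, (∀ k, Gstar m k (k + n) = G m k (k + n)) →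
      ∀ k, Gstar (m + n) k (k + n) = G (m + n) k (k + n) := by
    intro m n hZ k
    have h1 := cross (m + n) n k
    have h2 := shiftE n k (k + m)
    have h3 := cross n m k
    have h4 := hZ k
    have hassoc : k + (m + n) = k + m + n := (add_assoc k m n).symm
    rw [hassoc] at h1
    have hz : (Gstar (m + n) k (k + n) - G (m + n) k (k + n)) * star (d n (k + m)) = 0 := by
      linear_combination star (d n (k + m)) * h1 - h2 - star (d n (k + m + n)) * h3
        + star (d n (k + m + n)) * h4
    rcases mul_eq_zero.mp hz with h | h
    · exact sub_eq_zero.mp h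
    · exact absurd h (star_ne_zero.mpr (hd _ _))
  -- iterate the descent step
  have iter : ∀ (q : ℕ) (a n : Fin L), (∀ k, Gstar a k (k + n) = G a k (k + n)) →
      ∀ k, Gstar (a + q • n) k (k + n) = G (a + q • n) k (k + n) := by
    intro q
    induction q with
    | zero => intro a n h k; simpa using h k
    | succ q ih =>
        intro a n h k
        have := step (a + q • n) n (ih a n h) k
        rwa [succ_nsmul, ← add_assoc]
  -- the swap symmetry
  have swap : ∀ m n : Fin L, (∀ k, Gstar m k (k + n) = G m k (k + n)) →
      ∀ k, Gstar n k (k + m) = G n k (k + m) := by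
    intro m n h k
    linear_combination cross n m k - h k
  -- main induction: strong induction on the offset `n`
  have main : ∀ N : ℕ, ∀ n m : Fin L, n.val = N → ∀ k, Gstar m k (k + n) = G m k (k + n) := by
    intro N
    induction N using Nat.strong_induction_on with
    | _ N IH =>
      intro n m hn k
      by_cases h0 : n = 0
      · subst h0
        rw [add_zero]
        exact diag m k
      · have hnpos : 0 < n.val := Nat.pos_of_ne_zero fun h => h0 (Fin.ext (by simp [h]))
        set q := m.val / n.val with hq
        set r := m.val % n.val with hr
        have hrlt : r < n.val := Nat.mod_lt _ hnpos
        have hrL : r < L := lt_of_lt_of_le hrlt (le_of_lt n.isLt)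
        set r' : Fin L := ⟨r, hrL⟩ with hr'
        open Fin.CommRing in
        have hm : m = r' + q • n := by
          have hval : q * n.val + r = m.val := by
            rw [Nat.mul_comm]; exact Nat.div_add_mod m.val n.val
          have h1 : r' = ((r : ℕ) : Fin L) := Fin.ext (Fin.val_cast_of_lt hrL).symm
          rw [h1, nsmul_eq_mul]
          conv_lhs => rw [← Fin.cast_val_eq_self m]
          rw [← hval]
          push_cast
          ring
        have h1 : ∀ k', Gstar n k' (k' + r') = G n k' (k' + r') :=
          IH r (hn ▸ hrlt) r' n rfl
        have h2 : ∀ k', Gstar r' k' (k' + n) = G r' k' (k' + n) := swap n r' h1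
        have h3 := iter q r' n h2
        rw [hm]
        exact h3 k
  intro m
  ext k₁ k₂
  have h := main (k₂ - k₁).val (k₂ - k₁) m rfl k₁
  have hk : k₁ + (k₂ - k₁) = k₂ := add_sub_cancel k₁ k₂
  rwa [hk] at h
end

section
/- Let $\hat{\Sigma} \in \mathbb{C}^{L\times L}$ satisfy $\hat{\Sigma}[i,j] \neq 0$ for all $i,j$, and let $X \in \mathbb{C}^{L\times L}$ be any matrix satisfying $X[k,k] = \hat{\Sigma}[k,k]$ for all $k$ and $X[k_1,k_2]\overline{X[k_3-k_2+k_1,k_3]} + X[k_1,k_3-k_2+k_1]\overline{X[k_2,k_3]} = \hat{\Sigma}[k_1,k_2]\overline{\hat{\Sigma}[k_3-k_2+k_1,k_3]} + \hat{\Sigma}[k_1,k_3-k_2+k_1]\overline{\hat{\Sigma}[k_2,k_3]}$ for all $k_1,k_2,k_3$ (indices mod $L$). Then there exist angles $\varphi_1,\ldots,\varphi_{L-1} \in [0,2\pi)$ such that $X = \hat{\Sigma} \odot \operatorname{Circulant}\{[1, e^{i\varphi_1},\ldots, e^{i\varphi_{L-1}}]\}$. -/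
open Matrix

/-- Solutions of the moment equations ("only if" direction of Lemma 1): if `Σ` has no
zero entries and `X` matches `Σ` on the diagonal (power spectrum) and satisfies the
trispectrum equations, then `X` equals `Σ` multiplied entrywise by a circulant matrix
of phases `[1, e^{iφ₁}, …, e^{iφ_{L-1}}]` with `φ_m ∈ [0, 2π)`. -/
theorem stmt17 (L : ℕ) [NeZero L] (Sig X : Matrix (Fin L) (Fin L) ℂ)
    (hnz : ∀ i j, Sig i j ≠ 0)
    (hdiag : ∀ k, X k k = Sig k k)
    (htri : ∀ k₁ k₂ k₃ : Fin L,
      X k₁ k₂ * star (X (k₃ - k₂ + k₁) k₃) + X k₁ (k₃ - k₂ + k₁) * star (X k₂ k₃) =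
        Sig k₁ k₂ * star (Sig (k₃ - k₂ + k₁) k₃) +
          Sig k₁ (k₃ - k₂ + k₁) * star (Sig k₂ k₃)) :
    ∃ φ : Fin L → ℝ, φ 0 = 0 ∧ (∀ m, φ m ∈ Set.Ico (0 : ℝ) (2 * Real.pi)) ∧
      ∀ k₁ k₂, X k₁ k₂ = Sig k₁ k₂ * Complex.exp (Complex.I * (φ (k₂ - k₁) : ℂ)) := by
  classical
  letI := Fin.instCommRing L
  -- Step (a): modulus equality
  have habs : ∀ i j, X i j * star (X i j) = Sig i j * star (Sig i j) := by
    intro i j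
    have h := htri i i j
    have e : j - i + i = j := by ring
    rw [e, hdiag i, hdiag j] at h
    exact add_left_cancel h
  have hSnz : ∀ i j, Sig i j * star (Sig i j) ≠ 0 := fun i j =>
    mul_ne_zero (hnz i j) (star_ne_zero.mpr (hnz i j))
  -- ratios along diagonals
  set r : Fin L → Fin L → ℂ := fun a k => X k (k + a) / Sig k (k + a) with hrdef
  have hXr : ∀ a k, X k (k + a) = r a k * Sig k (k + a) := by
    intro a k
    rw [hrdef]
    rw [div_mul_cancel₀ _ (hnz _ _)]
  have hr1 : ∀ a k, r a k * star (r a k) = 1 := by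
    intro a k
    rw [hrdef]
    simp only [star_div₀]
    rw [div_mul_div_comm, habs, div_self (hSnz _ _)]
  -- shifting lemma: from the cross equation, ratio at k equals ratio at k+1
  have hshift : ∀ a k,
      X k (k + a) * star (X (k + 1) ((k + 1) + a)) =
        Sig k (k + a) * star (Sig (k + 1) ((k + 1) + a)) → r a (k + 1) = r a k := by
    intro a k h
    rw [hXr a k, hXr a (k + 1), star_mul'] at h
    have h2 : (r a k * star (r a (k + 1))) * (Sig k (k + a) * star (Sig (k + 1) (k + 1 + a)))
        = 1 * (Sig k (k + a) * star (Sig (k + 1) (k + 1 + a))) := by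
      linear_combination h
    have h3 := mul_right_cancel₀ (mul_ne_zero (hnz _ _) (star_ne_zero.mpr (hnz _ _))) h2
    calc r a (k + 1) = (r a k * star (r a (k + 1))) * r a (k + 1) := by rw [h3, one_mul]
      _ = r a k * (r a (k + 1) * star (r a (k + 1))) := by ring
      _ = r a k := by rw [hr1, mul_one]
  -- the diagonal-1 ratio is shift-invariant: use htri with k₂ = k+1, k₃ = k+2
  have hq : ∀ k, r 1 (k + 1) = r 1 k := by
    intro k
    apply hshift 1 k
    have h := htri k (k + 1) (k + 1 + 1)
    have e : (k + 1 + 1) - (k + 1) + k = k + 1 := by ring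
    rw [e] at h
    have h2 : (2 : ℂ) * (X k (k + 1) * star (X (k + 1) (k + 1 + 1))) =
        2 * (Sig k (k + 1) * star (Sig (k + 1) (k + 1 + 1))) := by
      rw [two_mul, two_mul]; exact h
    exact mul_left_cancel₀ two_ne_zero h2
  -- hence the diagonal-1 ratio is constant
  have hconst1 : ∀ k, r 1 k = r 1 0 := by
    intro k
    have hn : ∀ n : ℕ, r 1 (n : Fin L) = r 1 0 := by
      intro n
      induction n with
      | zero => simp
      | succ n ih =>
        have e : ((n + 1 : ℕ) : Fin L) = (n : Fin L) + 1 := by push_cast; ring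
        rw [e, hq, ih]
    rw [← Fin.cast_val_eq_self k, hn]
  -- now every diagonal ratio is constant under shift by 1
  have hshift1 : ∀ a k, r a (k + 1) = r a k := by
    intro a k
    apply hshift a k
    have h := htri k (k + a) (k + a + 1)
    have e : (k + a + 1) - (k + a) + k = k + 1 := by ring
    rw [e] at h
    -- second terms agree by constancy of r 1
    have e2 : k + a + 1 = (k + a) + 1 := by ring
    have hsec : X k (k + 1) * star (X (k + a) (k + a + 1)) =
        Sig k (k + 1) * star (Sig (k + a) (k + a + 1)) := by
      rw [e2, hXr 1 k, hXr 1 (k + a), hconst1 (k + a), hconst1 k, star_mul']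
      calc r 1 0 * Sig k (k + 1) * (star (r 1 0) * star (Sig (k + a) (k + a + 1)))
          = (r 1 0 * star (r 1 0)) * (Sig k (k + 1) * star (Sig (k + a) (k + a + 1))) := by ring
        _ = Sig k (k + 1) * star (Sig (k + a) (k + a + 1)) := by rw [hr1, one_mul]
    rw [hsec] at h
    have e3 : (k + 1) + a = k + a + 1 := by ring
    rw [e3]
    linear_combination h
  -- constancy over all of Fin L
  have hconst : ∀ a k, r a k = r a 0 := by
    intro a k
    have hn : ∀ n : ℕ, r a (n : Fin L) = r a 0 := by
      intro n
      induction n with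
      | zero => simp
      | succ n ih =>
        have e : ((n + 1 : ℕ) : Fin L) = (n : Fin L) + 1 := by push_cast; ring
        rw [e, hshift1, ih]
    rw [← Fin.cast_val_eq_self k, hn]
  -- the unit u m := r m 0 and its phase
  set u : Fin L → ℂ := fun m => r m 0 with hudef
  have hu1 : ∀ m, u m * star (u m) = 1 := fun m => hr1 m 0
  have huabs : ∀ m, ‖u m‖ = 1 := by
    intro m
    have h := hu1 m
    have h2 : (Complex.normSq (u m) : ℂ) = 1 := by rw [← Complex.mul_conj]; exact h
    have h3 : Complex.normSq (u m) = 1 := by exact_mod_cast h2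
    have : ‖u m‖ ^ 2 = 1 := by rw [← Complex.sq_norm] at h3; exact h3
    nlinarith [norm_nonneg (u m)]
  have hue : ∀ m, Complex.exp ((u m).arg * Complex.I) = u m := by
    intro m
    have := Complex.norm_mul_exp_arg_mul_I (u m)
    rwa [huabs m, Complex.ofReal_one, one_mul] at this
  -- main entrywise formula with u
  have hmain : ∀ k₁ k₂, X k₁ k₂ = Sig k₁ k₂ * u (k₂ - k₁) := by
    intro k₁ k₂
    have e : k₁ + (k₂ - k₁) = k₂ := by ring
    have h := hXr (k₂ - k₁) k₁
    rw [e] at h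
    rw [h, hconst (k₂ - k₁) k₁]
    ring
  -- define φ
  refine ⟨fun m => if 0 ≤ (u m).arg then (u m).arg else (u m).arg + 2 * Real.pi, ?_, ?_, ?_⟩
  · have hu0 : u 0 = 1 := by
      rw [hudef, hrdef]
      simp only [add_zero]
      rw [hdiag 0, div_self (hnz 0 0)]
    simp [hu0]
  · intro m
    by_cases h : 0 ≤ (u m).arg
    · simp only [h, if_pos]
      constructor
      · exact h
      · have := Complex.arg_le_pi (u m)
        have := Real.pi_pos
        linarith
    · simp only [h, if_neg, not_false_iff]
      constructor
      · have := Complex.neg_pi_lt_arg (u m)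
        linarith
      · push_neg at h
        linarith
  · intro k₁ k₂
    rw [hmain k₁ k₂]
    congr 1
    by_cases h : 0 ≤ (u (k₂ - k₁)).arg
    · simp only [h, if_pos]
      rw [mul_comm]
      exact (hue (k₂ - k₁)).symm
    · simp only [h, if_neg, not_false_iff]
      push_cast
      rw [mul_add, Complex.exp_add]
      have h2 : Complex.exp (Complex.I * (2 * Real.pi)) = 1 := by
        rw [mul_comm]
        exact_mod_cast Complex.exp_two_pi_mul_I
      rw [h2, mul_one, mul_comm]
      exact (hue (k₂ - k₁)).symm
end

section
/- Let $\hat{\Sigma} \in \mathbb{C}^{L\times L}$ be Hermitian PSD of rank $r$, and for each $\ell \in \{0,\ldots,L-1\}$ let $X_\ell = \operatorname{diag}(f_\ell) \cdot \hat{\Sigma} \cdot \operatorname{diag}(f_\ell)^*$ where $f_\ell[k] = e^{-2\pi i k\ell/L}$. Then each $X_\ell$ is Hermitian, PSD, has rank $r$, satisfies $X_\ell[k,k] = \hat{\Sigma}[k,k]$ for all $k$, and satisfies the trispectrum equations $X_\ell[k_1,k_2]\overline{X_\ell[k_3-k_2+k_1,k_3]} + X_\ell[k_1,k_3-k_2+k_1]\overline{X_\ell[k_2,k_3]}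 = \hat{\Sigma}[k_1,k_2]\overline{\hat{\Sigma}[k_3-k_2+k_1,k_3]} + \hat{\Sigma}[k_1,k_3-k_2+k_1]\overline{\hat{\Sigma}[k_2,k_3]}$ for all $k_1,k_2,k_3$ (indices mod $L$). -/
open Matrix
open scoped ComplexOrder

lemma fDFT_eq_pow (L : ℕ) (ℓ k : Fin L) :
    fDFT L ℓ k = Complex.exp (-(2 * (Real.pi : ℂ) * Complex.I * ((ℓ : ℕ) : ℂ)) / (L : ℂ)) ^ (k : ℕ) := by
  rw [← Complex.exp_nat_mul, fDFT]
  ring_nf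

lemma star_fDFT (L : ℕ) (ℓ k : Fin L) : star (fDFT L ℓ k) = (fDFT L ℓ k)⁻¹ := by
  have h : (starRingEnd ℂ) (-(2 * (Real.pi : ℂ) * Complex.I * ((k:ℕ):ℂ) * ((ℓ:ℕ):ℂ)) / (L : ℂ))
      = -(-(2 * (Real.pi : ℂ) * Complex.I * ((k:ℕ):ℂ) * ((ℓ:ℕ):ℂ)) / (L : ℂ)) := by
    simp only [map_div₀, map_neg, _root_.map_mul, Complex.conj_ofNat, Complex.conj_I,
      map_natCast, Complex.conj_ofReal]
    ring
  rw [fDFT, Complex.star_def, ← Complex.exp_conj, h, Complex.exp_neg]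

lemma fDFT_ne_zero (L : ℕ) (ℓ k : Fin L) : fDFT L ℓ k ≠ 0 := Complex.exp_ne_zero _

/-- phase cancellation: if `a + d = b + c` in `Fin L` then the phases cancel. -/
lemma fDFT_phase (L : ℕ) (ℓ a b c d : Fin L) (h : a + d = b + c) :
    fDFT L ℓ a * (fDFT L ℓ b)⁻¹ * (fDFT L ℓ c)⁻¹ * fDFT L ℓ d = 1 := by
  have hL : (L : ℂ) ≠ 0 := by
    have : 0 < L := ℓ.pos
    exact_mod_cast this.ne'
  set ω : ℂ := Complex.exp (-(2 * (Real.pi : ℂ) * Complex.I * ((ℓ : ℕ) : ℂ)) / (L : ℂ)) with hω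
  have hω0 : ω ≠ 0 := Complex.exp_ne_zero _
  have hωL : ω ^ L = 1 := by
    rw [hω, ← Complex.exp_nat_mul]
    rw [mul_div_assoc']
    rw [mul_comm ((L:ℂ)) _, mul_div_assoc, div_self hL, mul_one]
    rw [show -(2 * (Real.pi : ℂ) * Complex.I * ((ℓ : ℕ) : ℂ)) = ((-(ℓ:ℕ) : ℤ) : ℂ) * (2 * Real.pi * Complex.I) by push_cast; ring]
    exact Complex.exp_int_mul_two_pi_mul_I _
  have key : ∀ m n : ℕ, m % L = n % L → ω ^ m = ω ^ n := by
    intro m n hmn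
    have : ∀ t : ℕ, ω ^ t = ω ^ (t % L) := by
      intro t
      conv_lhs => rw [← Nat.div_add_mod t L]
      rw [pow_add, pow_mul, hωL, one_pow, one_mul]
    rw [this m, this n, hmn]
  have hval : ((a : ℕ) + (d : ℕ)) % L = ((b : ℕ) + (c : ℕ)) % L := by
    have := congrArg Fin.val h
    simpa [Fin.add_def] using this
  have hpow : ω ^ ((a : ℕ) + (d : ℕ)) = ω ^ ((b : ℕ) + (c : ℕ)) := key _ _ hval
  rw [fDFT_eq_pow, fDFT_eq_pow, fDFT_eq_pow, fDFT_eq_pow, ← hω]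
  field_simp
  rw [← pow_add, ← pow_add]
  first
  | exact hpow
  | (rw [show (d:ℕ) + (a:ℕ) = (a:ℕ) + (d:ℕ) from add_comm _ _,
        show (c:ℕ) + (b:ℕ) = (b:ℕ) + (c:ℕ) from add_comm _ _]; exact hpow)

/-- Fundamental ambiguities: every `X_ℓ = diag(f_ℓ) Σ diag(f_ℓ)^*` is Hermitian, PSD,
has rank `r`, matches `Σ` on the diagonal (power spectrum), and satisfies the
trispectrum equations of `Σ`. -/
theorem stmt19 (L r : ℕ) (Sig : Matrix (Fin L) (Fin L) ℂ)
    (hPSD : Sig.PosSemidef) (hrank : Sig.rank = r)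
    (X : Fin L → Matrix (Fin L) (Fin L) ℂ)
    (hX : ∀ ℓ, X ℓ = Matrix.diagonal (fDFT L ℓ) * Sig * (Matrix.diagonal (fDFT L ℓ))ᴴ) :
    ∀ ℓ : Fin L, (X ℓ).IsHermitian ∧ (X ℓ).PosSemidef ∧ (X ℓ).rank = r ∧
      (∀ k, X ℓ k k = Sig k k) ∧
      (∀ k₁ k₂ k₃ : Fin L,
        X ℓ k₁ k₂ * star (X ℓ (k₃ - k₂ + k₁) k₃) +
            X ℓ k₁ (k₃ - k₂ + k₁) * star (X ℓ k₂ k₃) =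
          Sig k₁ k₂ * star (Sig (k₃ - k₂ + k₁) k₃) +
            Sig k₁ (k₃ - k₂ + k₁) * star (Sig k₂ k₃)) := by
  intro ℓ
  have hXpsd : (X ℓ).PosSemidef := by
    rw [hX ℓ]
    exact hPSD.mul_mul_conjTranspose_same _
  have hdet : IsUnit (Matrix.diagonal (fDFT L ℓ)).det := by
    rw [Matrix.det_diagonal]
    exact isUnit_iff_ne_zero.mpr (Finset.prod_ne_zero_iff.mpr fun k _ => fDFT_ne_zero L ℓ k)
  have hdet' : IsUnit ((Matrix.diagonal (fDFT L ℓ))ᴴ).det := by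
    rw [Matrix.det_conjTranspose]
    exact isUnit_star.mpr hdet
  have hrankX : (X ℓ).rank = r := by
    rw [hX ℓ, Matrix.rank_mul_eq_left_of_isUnit_det _ _ hdet',
      Matrix.rank_mul_eq_right_of_isUnit_det _ _ hdet, hrank]
  have hentry : ∀ a b, X ℓ a b = fDFT L ℓ a * Sig a b * star (fDFT L ℓ b) := by
    intro a b
    rw [hX ℓ]
    simp [Matrix.mul_apply, Matrix.diagonal_apply, Finset.sum_ite_eq, Finset.sum_ite_eq',
      Matrix.conjTranspose_apply, mul_comm]
  have hunit : ∀ k, fDFT L ℓ k * star (fDFT L ℓ k) = 1 := by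
    intro k
    rw [star_fDFT, mul_inv_cancel₀ (fDFT_ne_zero L ℓ k)]
  refine ⟨hXpsd.isHermitian, hXpsd, hrankX, ?_, ?_⟩
  · intro k
    rw [hentry k k, mul_comm (fDFT L ℓ k) (Sig k k), mul_assoc, hunit k, mul_one]
  · intro k₁ k₂ k₃
    set m := k₃ - k₂ + k₁ with hm
    haveI : NeZero L := ⟨ℓ.pos.ne'⟩
    have hsum : k₁ + k₃ = k₂ + m := by
      rw [hm]; abel
    have hphase : fDFT L ℓ k₁ * (fDFT L ℓ k₂)⁻¹ * (fDFT L ℓ m)⁻¹ * fDFT L ℓ k₃ = 1 :=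
      fDFT_phase L ℓ k₁ k₂ m k₃ hsum
    rw [hentry k₁ k₂, hentry m k₃, hentry k₁ m, hentry k₂ k₃]
    simp only [star_mul', star_star, star_inv₀, star_fDFT, inv_inv]
    linear_combination (Sig k₁ k₂ * star (Sig m k₃) + Sig k₁ m * star (Sig k₂ k₃)) * hphase
end
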